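/- The normalized volume ratio (V(SU(n+1))/V(SU(n)))^{1/(2n+1)} is asymptotic to (2πe/n)^{1/2} as n → ∞; in particular it tends to 0. -/

import Mathlib

open Real Filter Finset

/-- Macdonald volume of `SU(n)` with standard normalization. -/
noncomputable def VSU (n : ℕ) : ℝ :=
  Real.sqrt n * (2 * π) ^ (n * (n + 1) / 2 - 1) /
    ∏ i ∈ Finset.range (n - 1), ((Nat.factorial (i + 1) : ℝ))

lemma VSU_ratio (n : ℕ) (hn : 1 ≤ n) :
    VSU (n+1) / VSU n = Real.sqrt ((n:ℝ)+1) / Real.sqrt n * (2*π)^(n+1) / (n.factorial : ℝ) := by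
  have hπ : (0:ℝ) < 2*π := by positivity
  have hexp : (n+1) * ((n+1)+1) / 2 - 1 = (n*(n+1)/2 - 1) + (n+1) := by
    have h2 : n*(n+1) % 2 = 0 := Nat.even_iff.mp (Nat.even_mul_succ_self n)
    have h3 : (n+1)*((n+1)+1) = n*(n+1) + 2*(n+1) := by ring
    have h4 : 2 ≤ n*(n+1) := by nlinarith
    have key : ∀ a b : ℕ, a % 2 = 0 → b = a + 2*(n+1) → 2 ≤ a →
        b / 2 - 1 = (a/2 - 1) + (n+1) := by omega
    exact key _ _ h2 h3 h4
  have hprod : ∏ i ∈ Finset.range ((n+1) - 1), ((Nat.factorial (i+1) : ℝ))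
      = (∏ i ∈ Finset.range (n - 1), ((Nat.factorial (i+1) : ℝ))) * (n.factorial : ℝ) := by
    rw [show (n+1) - 1 = (n-1) + 1 from by omega, Finset.prod_range_succ,
      show n - 1 + 1 = n from by omega]
  have hP : (0:ℝ) < ∏ i ∈ Finset.range (n-1), ((Nat.factorial (i+1):ℝ)) :=
    Finset.prod_pos (fun i _ => by exact_mod_cast Nat.factorial_pos (i+1))
  have hsn : (0:ℝ) < Real.sqrt n := Real.sqrt_pos.mpr (by exact_mod_cast hn)
  have hfact : (0:ℝ) < (n.factorial : ℝ) := by exact_mod_cast Nat.factorial_pos n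
  have hpw : (0:ℝ) < (2*π) ^ (n*(n+1)/2 - 1) := by positivity
  unfold VSU
  rw [hexp, hprod, pow_add]
  push_cast
  field_simp

noncomputable def Gexp (n : ℕ) : ℝ :=
  ((1/2) * Real.log (((n:ℝ)+1)/(2*n)) + Real.log (2*π)/2 - 1/2
    - Real.log (Stirling.stirlingSeq n)) / (2*(n:ℝ)+1)

lemma key_eq (n : ℕ) (hn : 1 ≤ n) :
    (VSU (n+1) / VSU n) ^ ((1:ℝ)/(2*(n:ℝ)+1)) / Real.sqrt (2*π*Real.exp 1/n)
      = Real.exp (Gexp n) := by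
  have hn0 : (0:ℝ) < n := by exact_mod_cast hn
  have hπ : (0:ℝ) < π := pi_pos
  have hfact : (0:ℝ) < (n.factorial : ℝ) := by exact_mod_cast Nat.factorial_pos n
  have hR : (0:ℝ) < VSU (n+1) / VSU n := by
    rw [VSU_ratio n hn]; positivity
  have hq : (0:ℝ) < 2*π*Real.exp 1/n := by positivity
  have hsq : (0:ℝ) < Real.sqrt (2*π*Real.exp 1/n) := Real.sqrt_pos.mpr hq
  have hLpos : (0:ℝ) < (VSU (n+1) / VSU n) ^ ((1:ℝ)/(2*(n:ℝ)+1))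
      / Real.sqrt (2*π*Real.exp 1/n) := by positivity
  rw [← Real.exp_log hLpos]
  congr 1
  have hden : (2*(n:ℝ)+1) ≠ 0 := by positivity
  have hlogR : Real.log (VSU (n+1) / VSU n)
      = Real.log ((n:ℝ)+1) / 2 - Real.log n / 2 + ((n:ℝ)+1) * Real.log (2*π)
        - (Real.log (Stirling.stirlingSeq n) + 1/2 * Real.log (2*n)
            + (n:ℝ) * (Real.log n - 1)) := by
    have hfac : Real.log (n.factorial : ℝ)
        = Real.log (Stirling.stirlingSeq n) + 1/2 * Real.log (2*n)
            + (n:ℝ) * (Real.log n - 1) := by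
      have := Stirling.log_stirlingSeq_formula n
      rw [Real.log_div hn0.ne' (Real.exp_ne_zero 1), Real.log_exp] at this
      linarith
    rw [VSU_ratio n hn, Real.log_div (by positivity) hfact.ne',
      Real.log_mul (by positivity) (by positivity),
      Real.log_div (by positivity) (by positivity), Real.log_pow,
      Real.log_sqrt (by positivity), Real.log_sqrt hn0.le, hfac]
    push_cast
    ring
  rw [Real.log_div (by positivity) hsq.ne', Real.log_rpow hR,
    Real.log_sqrt hq.le, Real.log_div (by positivity) hn0.ne',
    Real.log_mul (by positivity) (Real.exp_ne_zero 1), Real.log_exp, hlogR,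
    Gexp, Real.log_div (by positivity) (by positivity),
    Real.log_mul two_ne_zero hn0.ne']
  have h2π : Real.log (2*π) = Real.log 2 + Real.log π :=
    Real.log_mul two_ne_zero hπ.ne'
  rw [h2π]
  field_simp
  ring

lemma tendsto_den : Tendsto (fun n : ℕ => 2*(n:ℝ)+1) atTop atTop := by
  apply tendsto_atTop_add_const_right
  exact (tendsto_natCast_atTop_atTop).const_mul_atTop two_pos

lemma tendsto_Gexp : Tendsto Gexp atTop (nhds 0) := by
  have hinv : Tendsto (fun n : ℕ => (2*(n:ℝ)+1)⁻¹) atTop (nhds 0) :=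
    tendsto_inv_atTop_zero.comp tendsto_den
  have hfrac : Tendsto (fun n : ℕ => ((n:ℝ)+1)/(2*n)) atTop (nhds (1/2)) := by
    have h1 : Tendsto (fun n : ℕ => 1/2 + (2*(n:ℝ))⁻¹) atTop (nhds (1/2 + 0)) := by
      refine tendsto_const_nhds.add ?_
      exact tendsto_inv_atTop_zero.comp ((tendsto_natCast_atTop_atTop).const_mul_atTop two_pos)
    rw [add_zero] at h1
    refine h1.congr' ?_
    filter_upwards [eventually_ge_atTop 1] with n hn
    have hn0 : (0:ℝ) < n := by exact_mod_cast hn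
    field_simp
  have hlogfrac : Tendsto (fun n : ℕ => Real.log (((n:ℝ)+1)/(2*n))) atTop
      (nhds (Real.log (1/2))) :=
    ((Real.continuousAt_log (by norm_num)).tendsto.comp hfrac)
  have hlogS : Tendsto (fun n : ℕ => Real.log (Stirling.stirlingSeq n)) atTop
      (nhds (Real.log (Real.sqrt π))) :=
    ((Real.continuousAt_log (Real.sqrt_pos.mpr pi_pos).ne').tendsto.comp
      Stirling.tendsto_stirlingSeq_sqrt_pi)
  have hnum : Tendsto (fun n : ℕ => (1/2) * Real.log (((n:ℝ)+1)/(2*n))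
      + Real.log (2*π)/2 - 1/2 - Real.log (Stirling.stirlingSeq n)) atTop
      (nhds ((1/2) * Real.log (1/2) + Real.log (2*π)/2 - 1/2 - Real.log (Real.sqrt π))) := by
    exact (((hlogfrac.const_mul _).add_const _).sub_const _).sub hlogS
  have := hnum.mul hinv
  rw [mul_zero] at this
  refine this.congr fun n => ?_
  simp [Gexp, div_eq_mul_inv]

/-- The normalized volume ratio `(V(SU(n+1))/V(SU(n)))^{1/(2n+1)}` is asymptotic to
`(2πe/n)^{1/2}` as `n → ∞`; in particular it tends to `0`. -/
theorem stmt5 :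
    Tendsto (fun n : ℕ =>
        (VSU (n + 1) / VSU n) ^ ((1 : ℝ) / (2 * (n : ℝ) + 1)) /
          Real.sqrt (2 * π * Real.exp 1 / n)) atTop (nhds 1) ∧
    Tendsto (fun n : ℕ => (VSU (n + 1) / VSU n) ^ ((1 : ℝ) / (2 * (n : ℝ) + 1)))
      atTop (nhds 0) := by
  have hfirst : Tendsto (fun n : ℕ =>
      (VSU (n + 1) / VSU n) ^ ((1 : ℝ) / (2 * (n : ℝ) + 1)) /
        Real.sqrt (2 * π * Real.exp 1 / n)) atTop (nhds 1) := by
    have h1 : Tendsto (fun n : ℕ => Real.exp (Gexp n)) atTop (nhds (Real.exp 0)) :=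
      Real.continuous_exp.continuousAt.tendsto.comp tendsto_Gexp
    rw [Real.exp_zero] at h1
    refine h1.congr' ?_
    filter_upwards [eventually_ge_atTop 1] with n hn
    exact (key_eq n hn).symm
  refine ⟨hfirst, ?_⟩
  have hsqrt0 : Tendsto (fun n : ℕ => Real.sqrt (2 * π * Real.exp 1 / n)) atTop
      (nhds 0) := by
    have h0 : Tendsto (fun n : ℕ => 2 * π * Real.exp 1 / (n:ℝ)) atTop (nhds 0) := by
      have := (tendsto_inv_atTop_zero.comp
        (tendsto_natCast_atTop_atTop : Tendsto (fun n : ℕ => (n:ℝ)) atTop atTop)).const_mul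
        (2 * π * Real.exp 1)
      rw [mul_zero] at this
      refine this.congr fun n => ?_
      simp [div_eq_mul_inv]
    have := (Real.continuous_sqrt.continuousAt.tendsto).comp h0
    rwa [Real.sqrt_zero] at this
  have h := hfirst.mul hsqrt0
  rw [one_mul] at h
  refine h.congr' ?_
  filter_upwards [eventually_ge_atTop 1] with n hn
  have hn0 : (0:ℝ) < n := by exact_mod_cast hn
  have hq : (0:ℝ) < 2*π*Real.exp 1/n := by positivity
  have hsq : Real.sqrt (2*π*Real.exp 1/n) ≠ 0 := (Real.sqrt_pos.mpr hq).ne'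
  field_simp
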